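/- Let H be a finite group, K a field of characteristic 0 containing a primitive |H|-th root of unity, and let σ₀ be a field automorphism of the algebraic closure of ℚ in K fixing all p-power roots of unity and raising all p'-order roots of unity to the p-th power. Then for every irreducible K-character χ of H and every h ∈ H, one has χ(h_p h_{p'}^p) = σ₀(χ(h)). In particular the class function h ↦ χ(h_p h_{p'}^p) is again an irreducible character of H. -/

import Mathlib

open Polynomial Matrix

section AuxiliaryForGaloisTwist

lemma pow_eq_pow_mod_of_pow_eq_one {M : Type*} [Monoid M] {x : M} {N : ℕ} (h : x ^ N = 1)
    (k : ℕ) : x ^ k = x ^ (k % N) := by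
  conv_lhs => rw [← Nat.div_add_mod k N]
  rw [pow_add, pow_mul, h, one_pow, one_mul]

lemma pow_eq_pow_of_modEq' {M : Type*} [Monoid M] {x : M} {N i j : ℕ} (h : x ^ N = 1)
    (hij : i ≡ j [MOD N]) : x ^ i = x ^ j := by
  rw [pow_eq_pow_mod_of_pow_eq_one h i, pow_eq_pow_mod_of_pow_eq_one h j]
  exact congrArg (x ^ ·) hij

variable {K : Type*} [Field K]

lemma trace_map_ringHom {n : ℕ} (σ : K →+* K) (M : Matrix (Fin n) (Fin n) K) :
    (M.map σ).trace = σ M.trace := by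
  simp [Matrix.trace, Matrix.diag, map_sum, Matrix.map_apply]

lemma mulVec_map_ringHom {n : ℕ} (σ : K →+* K) (M : Matrix (Fin n) (Fin n) K) (v : Fin n → K) :
    (M.map σ) *ᵥ (fun i => σ (v i)) = fun i => σ ((M *ᵥ v) i) := by
  funext i
  simp [Matrix.mulVec, dotProduct, map_sum, Matrix.map_apply]

lemma trace_mulVecLin {n : ℕ} (A : Matrix (Fin n) (Fin n) K) :
    LinearMap.trace K (Fin n → K) A.mulVecLin = A.trace := by
  rw [← Matrix.toLin'_apply', LinearMap.trace_eq_matrix_trace K (Pi.basisFun K (Fin n)),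
    LinearMap.toMatrix_eq_toMatrix', LinearMap.toMatrix'_toLin']

/-- an idempotent matrix has natural-number trace. -/
lemma trace_idem_natCast {n : ℕ} {P : Matrix (Fin n) (Fin n) K} (h : P * P = P) :
    ∃ c : ℕ, P.trace = (c : K) := by
  have h2 : ∀ x, P.mulVecLin (P.mulVecLin x) = P.mulVecLin x := by
    intro x
    rw [← LinearMap.comp_apply, ← Matrix.mulVecLin_mul, h]
  have hproj : LinearMap.IsProj (LinearMap.range P.mulVecLin) P.mulVecLin := by
    refine ⟨fun x => LinearMap.mem_range_self _ x, ?_⟩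
    rintro x ⟨y, rfl⟩
    exact h2 y
  exact ⟨Module.finrank K (LinearMap.range P.mulVecLin), by rw [← trace_mulVecLin, hproj.trace]⟩

/-- trace of a nonzero idempotent endomorphism is a positive natural. -/
lemma trace_idem_linmap {V : Type*} [AddCommGroup V] [Module K V] [FiniteDimensional K V]
    {f : V →ₗ[K] V} (h : ∀ x, f (f x) = f x) (hf : f ≠ 0) :
    ∃ c : ℕ, 0 < c ∧ LinearMap.trace K V f = (c : K) := by
  have hproj : LinearMap.IsProj (LinearMap.range f) f := by
    refine ⟨fun x => LinearMap.mem_range_self _ x, ?_⟩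
    rintro x ⟨y, rfl⟩
    exact h y
  refine ⟨Module.finrank K (LinearMap.range f), ?_, hproj.trace⟩
  rcases Nat.eq_zero_or_pos (Module.finrank K (LinearMap.range f)) with h0 | h0
  · exact absurd (LinearMap.range_eq_bot.mp (Submodule.finrank_eq_zero.mp h0)) hf
  · exact h0

/-- the operator `X ↦ A * X * B` on matrices. -/
noncomputable def conjOp {n : ℕ} (A B : Matrix (Fin n) (Fin n) K) :
    Matrix (Fin n) (Fin n) K →ₗ[K] Matrix (Fin n) (Fin n) K where
  toFun X := A * X * B
  map_add' X Y := by noncomm_ring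
  map_smul' c X := by simp [Matrix.mul_smul, Matrix.smul_mul]

@[simp] lemma conjOp_apply {n : ℕ} (A B X : Matrix (Fin n) (Fin n) K) :
    conjOp A B X = A * X * B := rfl

lemma stdBasis_repr_apply {n : ℕ} (M : Matrix (Fin n) (Fin n) K) (ij : Fin n × Fin n) :
    (Matrix.stdBasis K (Fin n) (Fin n)).repr M ij = M ij.1 ij.2 := by
  classical
  have key : M = ∑ ab : Fin n × Fin n, M ab.1 ab.2 • Matrix.stdBasis K (Fin n) (Fin n) ab := by
    conv_lhs => rw [Matrix.matrix_eq_sum_single M]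
    rw [← Finset.sum_product', Finset.univ_product_univ]
    refine Finset.sum_congr rfl fun ab _ => ?_
    rw [Matrix.stdBasis_eq_single, Matrix.smul_single, smul_eq_mul, mul_one]
  conv_lhs => rw [key]
  rw [map_sum]
  rw [Finset.sum_apply']
  simp only [_root_.map_smul, Module.Basis.repr_self, Finsupp.smul_apply, Finsupp.single_apply,
    smul_eq_mul, mul_ite, mul_one, mul_zero]
  rw [Finset.sum_ite_eq' Finset.univ ij (fun ab => M ab.1 ab.2)]
  simp

lemma trace_conjOp {n : ℕ} (A B : Matrix (Fin n) (Fin n) K) :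
    LinearMap.trace K _ (conjOp A B) = A.trace * B.trace := by
  classical
  rw [LinearMap.trace_eq_matrix_trace K (Matrix.stdBasis K (Fin n) (Fin n))]
  have entry : ∀ ij : Fin n × Fin n,
      (LinearMap.toMatrix (Matrix.stdBasis K (Fin n) (Fin n)) (Matrix.stdBasis K (Fin n) (Fin n))
        (conjOp A B)) ij ij = A ij.1 ij.1 * B ij.2 ij.2 := by
    intro ij
    rw [LinearMap.toMatrix_apply, stdBasis_repr_apply, Matrix.stdBasis_eq_single,
      conjOp_apply]
    rw [Matrix.mul_apply]
    have : ∀ k : Fin n, (A * Matrix.single ij.1 ij.2 (1:K)) ij.1 k * B k ij.2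
        = if k = ij.2 then A ij.1 ij.1 * B ij.2 ij.2 else 0 := by
      intro k
      by_cases hk : k = ij.2
      · subst hk
        rw [Matrix.mul_single_apply_same, mul_one, if_pos rfl]
      · rw [Matrix.mul_single_apply_of_ne (hbj := hk), zero_mul, if_neg hk]
    rw [Finset.sum_congr rfl fun k _ => this k, Finset.sum_ite_eq' Finset.univ ij.2]
    simp
  show ∑ ij : Fin n × Fin n, (LinearMap.toMatrix (Matrix.stdBasis K (Fin n) (Fin n))
      (Matrix.stdBasis K (Fin n) (Fin n)) (conjOp A B)).diag ij = _
  unfold Matrix.diag Matrix.trace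
  rw [Finset.sum_congr rfl fun ij _ => entry ij, ← Finset.univ_product_univ, Finset.sum_product]
  simp only []
  rw [Finset.sum_mul_sum Finset.univ Finset.univ (fun i => A.diag i) (fun j => B.diag j)]
  rfl

lemma galois_trace_lemma {N q : ℕ} (hN : 0 < N) {ζ : K}
    (hζ : IsPrimitiveRoot ζ N) (σ : K →+* K) (hσ : ∀ lam : K, lam ^ N = 1 → σ lam = lam ^ q)
    {n : ℕ} (M : Matrix (Fin n) (Fin n) K) (hM : M ^ N = 1) :
    σ M.trace = (M ^ q).trace := by
  classical
  set s : Finset K := Polynomial.nthRootsFinset N (1 : K) with hs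
  have hmem : ∀ x ∈ s, x ^ N = 1 := fun x hx => (Polynomial.mem_nthRootsFinset hN (1 : K)).mp hx
  have hcard : s.card = N := hζ.card_nthRootsFinset
  have hinj : Set.InjOn (id : K → K) s := Function.injective_id.injOn
  set P : K → Matrix (Fin n) (Fin n) K := fun x => Polynomial.aeval M (Lagrange.basis s id x)
    with hP
  have claimA : ∀ g : K[X], g.degree < (N : ℕ) → Polynomial.aeval M g = ∑ x ∈ s, g.eval x • P x := by
    intro g hg
    have hgi : g = Lagrange.interpolate s id fun i => g.eval i := by
      refine Lagrange.eq_interpolate hinj ?_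
      rw [hcard]
      exact hg
    conv_lhs => rw [hgi]
    rw [Lagrange.interpolate_apply, map_sum]
    refine Finset.sum_congr rfl fun x hx => ?_
    rw [_root_.map_mul, Polynomial.aeval_C, Algebra.smul_def]
  have claimB : ∀ k : ℕ, M ^ k = ∑ x ∈ s, x ^ k • P x := by
    intro k
    have h1 : M ^ k = Polynomial.aeval M ((Polynomial.X : K[X]) ^ (k % N)) := by
      rw [map_pow, Polynomial.aeval_X, pow_eq_pow_mod_of_pow_eq_one hM]
    rw [h1, claimA _ ?_]
    · refine Finset.sum_congr rfl fun x hx => ?_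
      rw [Polynomial.eval_pow, Polynomial.eval_X, ← pow_eq_pow_mod_of_pow_eq_one (hmem x hx)]
    · rw [Polynomial.degree_X_pow]
      exact_mod_cast Nat.mod_lt k hN
  have claimC : ∀ x ∈ s, P x * P x = P x := by
    intro x hx
    have hdvd : ((Polynomial.X : K[X]) ^ N - 1) ∣
        Lagrange.basis s id x * Lagrange.basis s id x - Lagrange.basis s id x := by
      rw [Polynomial.X_pow_sub_one_eq_prod hN hζ]
      refine Finset.prod_dvd_of_coprime ?_ ?_
      · intro a ha b hb hab
        exact Polynomial.pairwise_coprime_X_sub_C Function.injective_id hab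
      · intro y hy
        rw [Polynomial.dvd_iff_isRoot]
        show Polynomial.eval y _ = 0
        rw [Polynomial.eval_sub, Polynomial.eval_mul]
        by_cases hxy : x = y
        · subst hxy
          rw [show Polynomial.eval x (Lagrange.basis s id x)
              = Polynomial.eval (id x) (Lagrange.basis s id x) from rfl,
            Lagrange.eval_basis_self hinj hx]
          ring
        · rw [show Polynomial.eval y (Lagrange.basis s id x)
              = Polynomial.eval (id y) (Lagrange.basis s id x) from rfl,
            Lagrange.eval_basis_of_ne hxy hy]
          ring
    obtain ⟨c, hc⟩ := hdvd
    have h2 := congrArg (Polynomial.aeval M) hc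
    simp only [map_sub, _root_.map_mul, map_pow, Polynomial.aeval_X, _root_.map_one, hM, sub_self,
      zero_mul] at h2
    exact sub_eq_zero.mp h2
  have claimD : ∀ x ∈ s, σ (P x).trace = (P x).trace := by
    intro x hx
    obtain ⟨c, hc⟩ := trace_idem_natCast (claimC x hx)
    rw [hc, map_natCast]
  have e1 : M.trace = ∑ x ∈ s, x * (P x).trace := by
    conv_lhs => rw [show M = M ^ 1 by rw [pow_one], claimB 1]
    rw [Matrix.trace_sum]
    exact Finset.sum_congr rfl fun x hx => by rw [Matrix.trace_smul, pow_one, smul_eq_mul]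
  have e2 : (M ^ q).trace = ∑ x ∈ s, x ^ q * (P x).trace := by
    rw [claimB q, Matrix.trace_sum]
    exact Finset.sum_congr rfl fun x hx => by rw [Matrix.trace_smul, smul_eq_mul]
  rw [e1, map_sum, e2]
  refine Finset.sum_congr rfl fun x hx => ?_
  rw [_root_.map_mul, claimD x hx, hσ x (hmem x hx)]

end AuxiliaryForGaloisTwist

/-- `PParts p g gp gp'` says that `gp` and `gp'` are the `p`-part and `p'`-part of `g`. -/
def PParts {G : Type*} [Group G] (p : ℕ) (g gp gp' : G) : Prop :=
  (∃ m : ℕ, gp = g ^ m) ∧ (∃ n : ℕ, gp' = g ^ n) ∧ g = gp * gp' ∧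
    (∃ a : ℕ, orderOf gp = p ^ a) ∧ ¬ p ∣ orderOf gp'

/-- `f : G → G` is the map `g ↦ g_p * g_{p'}^p`. -/
def IsPartTwistMap {G : Type*} [Group G] (p : ℕ) (f : G → G) : Prop :=
  ∀ g : G, ∃ gp gp' : G, PParts p g gp gp' ∧ f g = gp * gp' ^ p

/-- A matrix representation `τ : H → GL_n(K)` is irreducible. -/
def MatIrreducible {K : Type*} [Field K] {H : Type*} [Group H] {n : ℕ}
    (τ : H →* GL (Fin n) K) : Prop :=
  0 < n ∧ ∀ W : Submodule K (Fin n → K),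
    (∀ h : H, ∀ v ∈ W, Matrix.mulVec ((τ h : GL (Fin n) K) : Matrix (Fin n) (Fin n) K) v ∈ W) →
    W = ⊥ ∨ W = ⊤

/-- `χ : H → K` is an irreducible `K`-character of `H`: the trace of some irreducible
matrix representation. -/
def IsIrrChar {K : Type*} [Field K] {H : Type*} [Group H] (χ : H → K) : Prop :=
  ∃ (n : ℕ) (τ : H →* GL (Fin n) K), MatIrreducible τ ∧
    ∀ h : H, χ h = Matrix.trace ((τ h : GL (Fin n) K) : Matrix (Fin n) (Fin n) K)

theorem galois_twist_of_irreducible_character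
    (p : ℕ) [Fact p.Prime] (H : Type*) [Group H] [Fintype H]
    (K : Type*) [Field K] [CharZero K]
    (hroot : ∃ ζ : K, IsPrimitiveRoot ζ (Fintype.card H))
    (σ₀ : K →+* K)
    (hfix : ∀ ζ : K, (∃ a : ℕ, ζ ^ (p ^ a) = 1) → σ₀ ζ = ζ)
    (hpow : ∀ ζ : K, ∀ n : ℕ, n ≠ 0 → ¬ p ∣ n → ζ ^ n = 1 → σ₀ ζ = ζ ^ p)
    (f : H → H) (hf : IsPartTwistMap p f)
    (χ : H → K) (hχ : IsIrrChar χ) :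
    (∀ h : H, χ (f h) = σ₀ (χ h)) ∧ IsIrrChar (fun h => χ (f h)) := by
  classical
  obtain ⟨n, τ, hMI, htr⟩ := hχ
  obtain ⟨ζ, hζ⟩ := hroot
  set N := Fintype.card H with hNdef
  have hN : 0 < N := Fintype.card_pos
  have hN0 : N ≠ 0 := hN.ne'
  have hp : p.Prime := Fact.out
  -- matrix entries of the representation
  set A : H → Matrix (Fin n) (Fin n) K :=
    fun h => ((τ h : GL (Fin n) K) : Matrix (Fin n) (Fin n) K) with hAdef
  have hAmul : ∀ g h : H, A (g * h) = A g * A h := fun g h => by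
    simp only [hAdef, _root_.map_mul, Units.val_mul]
  have hA1 : A 1 = 1 := by simp only [hAdef, _root_.map_one, Units.val_one]
  have hApow : ∀ (h : H) (k : ℕ), A (h ^ k) = A h ^ k := fun h k => by
    simp only [hAdef, _root_.map_pow, Units.val_pow_eq_pow_val]
  have hAN : ∀ h : H, A h ^ N = 1 := fun h => by
    rw [← hApow, pow_card_eq_one, hA1]
  -- CRT exponent q
  set Np := p ^ N.factorization p with hNp
  set Np' := N / p ^ N.factorization p with hNp'
  have hcop : Np.Coprime Np' := (Nat.coprime_ordCompl hp hN0).pow_left _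
  have hNpmul : Np * Np' = N := Nat.ordProj_mul_ordCompl_eq_self N p
  obtain ⟨q, hq1, hqp⟩ := Nat.chineseRemainder hcop 1 p
  -- the scalar lemma
  have hscalar : ∀ lam : K, lam ^ N = 1 → σ₀ lam = lam ^ q := by
    intro lam hlam
    obtain ⟨a, ha1, ha0⟩ := Nat.chineseRemainder hcop 1 0
    obtain ⟨b, hb0, hb1⟩ := Nat.chineseRemainder hcop 0 1
    have hab : a + b ≡ 1 [MOD N] := by
      rw [← hNpmul]
      exact (Nat.modEq_and_modEq_iff_modEq_mul hcop).mp
        ⟨by simpa using ha1.add hb0, by simpa using ha0.add hb1⟩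
    have hsplit : lam = lam ^ a * lam ^ b := by
      rw [← pow_add]
      conv_lhs => rw [← pow_one lam]
      exact pow_eq_pow_of_modEq' hlam hab.symm
    have hNp'a : Np' ∣ a := Nat.modEq_zero_iff_dvd.mp ha0
    have hNpb : Np ∣ b := Nat.modEq_zero_iff_dvd.mp hb0
    have h1 : σ₀ (lam ^ a) = lam ^ a := by
      apply hfix
      refine ⟨N.factorization p, ?_⟩
      obtain ⟨t, ht⟩ := hNp'a
      rw [← pow_mul]
      have he : a * Np = N * t := by
        calc a * Np = Np * Np' * t := by rw [ht]; ring
        _ = N * t := by rw [hNpmul]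
      rw [hNp] at he
      rw [he, pow_mul, hlam, one_pow]
    have h2 : σ₀ (lam ^ b) = (lam ^ b) ^ p := by
      apply hpow _ Np' (Nat.ordCompl_pos p hN0).ne' (Nat.not_dvd_ordCompl hp hN0)
      obtain ⟨t, ht⟩ := hNpb
      rw [← pow_mul]
      have he : b * Np' = N * t := by
        calc b * Np' = Np * Np' * t := by rw [ht]; ring
        _ = N * t := by rw [hNpmul]
      rw [he, pow_mul, hlam, one_pow]
    have habq : a + b * p ≡ q [MOD N] := by
      rw [← hNpmul]
      refine (Nat.modEq_and_modEq_iff_modEq_mul hcop).mp ⟨?_, ?_⟩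
      · have : a + b * p ≡ 1 [MOD Np] := by simpa using ha1.add (hb0.mul_right p)
        exact this.trans hq1.symm
      · have : a + b * p ≡ p [MOD Np'] := by simpa using ha0.add (hb1.mul_right p)
        exact this.trans hqp.symm
    calc σ₀ lam = σ₀ (lam ^ a) * σ₀ (lam ^ b) := by rw [← _root_.map_mul, ← hsplit]
    _ = lam ^ a * (lam ^ b) ^ p := by rw [h1, h2]
    _ = lam ^ (a + b * p) := by rw [← pow_mul, ← pow_add]
    _ = lam ^ q := pow_eq_pow_of_modEq' hlam habq
  -- uniformization of f
  have hfq : ∀ h : H, f h = h ^ q := by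
    intro h
    obtain ⟨gp, gp', ⟨⟨m, hm⟩, ⟨nn, hn⟩, hprod, ⟨a, hordp⟩, hord'⟩, hfh⟩ := hf h
    set d := orderOf h with hd
    have hd0 : d ≠ 0 := (orderOf_pos h).ne'
    have hdN : d ∣ N := orderOf_dvd_card
    have hhd : h ^ d = 1 := pow_orderOf_eq_one h
    set dp := p ^ d.factorization p with hdp
    set dp' := d / p ^ d.factorization p with hdp'
    have hcopd : dp.Coprime dp' := (Nat.coprime_ordCompl hp hd0).pow_left _
    have hdpmul : dp * dp' = d := Nat.ordProj_mul_ordCompl_eq_self d p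
    have hmn1 : m + nn ≡ 1 [MOD d] := by
      rw [hd]
      refine pow_eq_pow_iff_modEq.mp ?_
      rw [pow_add, ← hm, ← hn, pow_one, ← hprod]
    have hdp'm : dp' ∣ m := by
      have h1 : d ∣ m * p ^ a := by
        apply orderOf_dvd_of_pow_eq_one
        rw [pow_mul, ← hm, ← hordp]
        exact pow_orderOf_eq_one gp
      have h2 : dp' ∣ m * p ^ a := dvd_trans (Nat.ordCompl_dvd d p) h1
      exact ((Nat.coprime_ordCompl hp hd0).symm.pow_right a).dvd_of_dvd_mul_right h2
    have hdpn : dp ∣ nn := by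
      have h1 : d ∣ nn * orderOf gp' := by
        apply orderOf_dvd_of_pow_eq_one
        rw [pow_mul, ← hn]
        exact pow_orderOf_eq_one gp'
      have h2 : dp ∣ nn * orderOf gp' := dvd_trans (Nat.ordProj_dvd d p) h1
      exact (((hp.coprime_iff_not_dvd).mpr hord').pow_left _).dvd_of_dvd_mul_right h2
    have hmodd : m + nn * p ≡ q [MOD d] := by
      rw [← hdpmul]
      refine (Nat.modEq_and_modEq_iff_modEq_mul hcopd).mp ⟨?_, ?_⟩
      · -- mod dp
        have hdpNp : dp ∣ Np := Nat.ordProj_dvd_ordProj_of_dvd hN0 hdN p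
        have hnn0 : nn ≡ 0 [MOD dp] := Nat.modEq_zero_iff_dvd.mpr hdpn
        have hmn1' : m + nn ≡ 1 [MOD dp] := hmn1.of_dvd (by rw [← hdpmul]; exact Dvd.intro _ rfl)
        have hm1 : m ≡ 1 [MOD dp] := by
          have h0 : m + 0 ≡ m + nn [MOD dp] := Nat.ModEq.add_left m hnn0.symm
          simpa using h0.trans hmn1'
        have : m + nn * p ≡ 1 [MOD dp] := by
          simpa using hm1.add (hnn0.mul_right p)
        exact this.trans (hq1.of_dvd hdpNp).symm
      · -- mod dp'
        have hdp'Np' : dp' ∣ Np' := Nat.ordCompl_dvd_ordCompl_of_dvd hdN p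
        have hm0 : m ≡ 0 [MOD dp'] := Nat.modEq_zero_iff_dvd.mpr hdp'm
        have hmn1' : m + nn ≡ 1 [MOD dp'] :=
          hmn1.of_dvd (by rw [← hdpmul]; exact Dvd.intro_left _ rfl)
        have hn1 : nn ≡ 1 [MOD dp'] := by
          have h0 : 0 + nn ≡ m + nn [MOD dp'] := (hm0.symm).add_right nn
          simpa using h0.trans hmn1'
        have : m + nn * p ≡ p [MOD dp'] := by
          simpa using hm0.add (hn1.mul_right p)
        exact this.trans (hqp.of_dvd hdp'Np').symm
    rw [hfh, hm, hn, ← pow_mul, ← pow_add]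
    exact pow_eq_pow_of_modEq' hhd hmodd
  -- part 1 core
  have hsig : ∀ g : H, σ₀ (χ g) = χ (g ^ q) := by
    intro g
    rw [htr g, htr (g ^ q)]
    have e := galois_trace_lemma hN hζ σ₀ hscalar (A g) (hAN g)
    rw [← hApow g q] at e
    simpa only [hAdef] using e
  have part1 : ∀ h : H, χ (f h) = σ₀ (χ h) := fun h => by rw [hfq h, hsig h]
  refine ⟨part1, ?_⟩
  -- ===================== Part 2 =====================
  have hhN : ∀ g : H, g ^ N = 1 := fun g => pow_card_eq_one
  have hqN : q.Coprime N := by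
    have h1 : q.Coprime Np := by
      unfold Nat.Coprime
      rw [hq1.gcd_eq, Nat.gcd_one_left]
    have h2 : q.Coprime Np' := by
      unfold Nat.Coprime
      rw [hqp.gcd_eq]
      exact Nat.coprime_ordCompl hp hN0
    rw [← hNpmul]
    exact h1.mul_right h2
  have ht0 : 0 < N.totient := Nat.totient_pos.mpr hN
  have hqt : q ^ N.totient ≡ 1 [MOD N] := Nat.ModEq.pow_totient hqN
  set σiter : ℕ → (K →+* K) :=
    fun j => Nat.rec (RingHom.id K) (fun _ s => s.comp σ₀) j with hσiter
  have hiterS : ∀ j, σiter (j + 1) = (σiter j).comp σ₀ := fun j => rfl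
  have hsigiter : ∀ j (g : H), σiter j (χ g) = χ (g ^ q ^ j) := by
    intro j
    induction j with
    | zero => intro g; show RingHom.id K (χ g) = χ (g ^ q ^ 0); simp
    | succ j ih =>
      intro g
      rw [hiterS j, RingHom.comp_apply, hsig g, ih (g ^ q), ← pow_mul, ← pow_succ']
  set B2 : H → Matrix (Fin n) (Fin n) K := fun h => (A h).map (σiter N.totient) with hB2
  have hB2mul : ∀ x y : H, B2 (x * y) = B2 x * B2 y := by
    intro x y
    simp only [hB2, hAmul, Matrix.map_mul]
  have hB2one : B2 1 = 1 := by
    simp only [hB2, hA1]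
    exact Matrix.map_one _ (map_zero _) (map_one _)
  have hq_fix : ∀ g : H, g ^ q ^ N.totient = g := fun g => by
    have := pow_eq_pow_of_modEq' (hhN g) hqt
    simpa using this
  have htrB2 : ∀ h : H, (B2 h).trace = χ h := by
    intro h
    have e1 : (B2 h).trace = σiter N.totient ((A h).trace) := by
      simp only [hB2]
      exact trace_map_ringHom _ _
    rw [e1, ← htr h, hsigiter, hq_fix h]
  -- the twisted representation
  set τ' : H →* GL (Fin n) K :=
    (Units.map (σ₀.mapMatrix (m := Fin n)).toMonoidHom).comp τ with hτ'def
  have hτ'mat : ∀ h : H,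
      ((τ' h : GL (Fin n) K) : Matrix (Fin n) (Fin n) K) = (A h).map σ₀ := by
    intro h
    show (((Units.map (σ₀.mapMatrix (m := Fin n)).toMonoidHom) (τ h) :
      (Matrix (Fin n) (Fin n) K)ˣ) : Matrix (Fin n) (Fin n) K) = _
    rw [Units.coe_map]
    rfl
  refine ⟨n, τ', ⟨hMI.1, ?_⟩, fun h => ?_⟩
  swap
  · -- the trace of the twisted representation
    show χ (f h) = _
    rw [hτ'mat h, trace_map_ringHom, ← htr h, part1 h]
  -- irreducibility of the twisted representation
  intro W hW
  by_contra hcon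
  push_neg at hcon
  obtain ⟨hWbot, hWtop⟩ := hcon
  have hWinv : ∀ (h : H), ∀ v ∈ W, ((A h).map σ₀) *ᵥ v ∈ W := by
    intro h v hv
    have hx := hW h v hv
    rwa [hτ'mat h] at hx
  obtain ⟨w₀, hw₀W, hw₀⟩ := (Submodule.ne_bot_iff W).mp hWbot
  set u := N.totient - 1 with hu
  have hu1 : u + 1 = N.totient := Nat.succ_pred_eq_of_pos ht0
  set σc := σiter u with hσc
  have hB2c : ∀ h : H, B2 h = ((A h).map σ₀).map σc := by
    intro h
    simp only [hB2, hσc]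
    rw [← hu1, hiterS u, RingHom.coe_comp, ← Matrix.map_map]
  set mv : (Fin n → K) → (Fin n → K) := fun v i => σc (v i) with hmv
  set W₂ : Submodule K (Fin n → K) := Submodule.span K (mv '' (W : Set (Fin n → K)))
    with hW₂def
  have hinv₂ : ∀ (h : H) (v : Fin n → K), v ∈ W₂ → (B2 h) *ᵥ v ∈ W₂ := by
    intro h v hv
    induction hv using Submodule.span_induction with
    | mem x hx =>
      obtain ⟨w, hwW, rfl⟩ := hx
      have hcomm : B2 h *ᵥ mv w = mv (((A h).map σ₀) *ᵥ w) := by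
        rw [hB2c h]
        exact mulVec_map_ringHom σc ((A h).map σ₀) w
      rw [hcomm]
      exact Submodule.subset_span ⟨_, hWinv h w hwW, rfl⟩
    | zero => rw [Matrix.mulVec_zero]; exact W₂.zero_mem
    | add x y hx hy ihx ihy => rw [Matrix.mulVec_add]; exact W₂.add_mem ihx ihy
    | smul a x hx ihx => rw [Matrix.mulVec_smul]; exact W₂.smul_mem a ihx
  have hmv0 : mv w₀ ≠ 0 := by
    intro hz
    apply hw₀
    funext i
    have hzi := congrFun hz i
    simp only [hmv, Pi.zero_apply] at hzi
    exact σc.injective (hzi.trans (map_zero σc).symm)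
  have hW₂bot : W₂ ≠ ⊥ := by
    intro hb
    have hx : mv w₀ ∈ W₂ := Submodule.subset_span ⟨w₀, hw₀W, rfl⟩
    rw [hb] at hx
    exact hmv0 ((Submodule.mem_bot K).mp hx)
  have hW₂rank : Module.finrank K W₂ ≤ Module.finrank K W := by
    set bW := Module.finBasis K ↥W with hbW
    have hle : W₂ ≤ Submodule.span K
        (Set.range fun i : Fin (Module.finrank K ↥W) => mv ((bW i : Fin n → K))) := by
      rw [hW₂def, Submodule.span_le]
      rintro x ⟨w, hwW, rfl⟩
      have hwv : w = ∑ i, bW.repr ⟨w, hwW⟩ i • ((bW i : Fin n → K)) := by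
        have h1 := bW.sum_repr ⟨w, hwW⟩
        have h2 := congrArg (Subtype.val) h1
        simpa only [Submodule.coe_sum, Submodule.coe_smul] using h2.symm
      have hmvw : mv w = ∑ i, σc (bW.repr ⟨w, hwW⟩ i) • mv ((bW i : Fin n → K)) := by
        funext j
        show σc (w j) = _
        conv_lhs => rw [hwv]
        rw [Finset.sum_apply, map_sum, Finset.sum_apply]
        refine Finset.sum_congr rfl fun i _ => ?_
        simp only [Pi.smul_apply, smul_eq_mul, _root_.map_mul, hmv]
      rw [hmvw]
      exact Submodule.sum_mem _ fun i _ =>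
        Submodule.smul_mem _ _ (Submodule.subset_span ⟨i, rfl⟩)
    have h1 : Module.finrank K (Submodule.span K
        (Set.range fun i : Fin (Module.finrank K ↥W) => mv ((bW i : Fin n → K))))
        ≤ Module.finrank K ↥W := by
      have h2 := finrank_span_le_card (R := K)
        (Set.range fun i : Fin (Module.finrank K ↥W) => mv ((bW i : Fin n → K)))
      rw [Set.toFinset_card] at h2
      exact h2.trans ((Fintype.card_range_le _).trans (by simp))
    exact (Submodule.finrank_mono hle).trans h1
  have hWrank : Module.finrank K ↥W < n := by
    have hlt := Submodule.finrank_lt (K := K) hWtop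
    rwa [Module.finrank_fin_fun] at hlt
  -- nonvanishing of the character norm
  have hAinv' : ∀ h : H, A h * A h⁻¹ = 1 := fun h => by rw [← hAmul, mul_inv_cancel, hA1]
  set T1 : Matrix (Fin n) (Fin n) K →ₗ[K] Matrix (Fin n) (Fin n) K :=
    ∑ h : H, conjOp (A h) (A h⁻¹) with hT1
  have hT1apply : ∀ X, T1 X = ∑ h : H, A h * X * A h⁻¹ := by
    intro X
    rw [hT1, LinearMap.sum_apply]
    rfl
  have hNK : (N : K) ≠ 0 := Nat.cast_ne_zero.mpr hN0
  have hT1T1 : ∀ X, T1 (T1 X) = (N : K) • T1 X := by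
    intro X
    rw [hT1apply (T1 X)]
    have step : ∀ g : H, A g * T1 X * A g⁻¹ = T1 X := by
      intro g
      conv_rhs => rw [hT1apply X]
      conv_lhs => rw [hT1apply X, Finset.mul_sum, Finset.sum_mul]
      refine Fintype.sum_equiv (Equiv.mulLeft g) _ _ ?_
      intro x
      show A g * (A x * X * A x⁻¹) * A g⁻¹ = A (g * x) * X * A (g * x)⁻¹
      rw [_root_.mul_inv_rev, hAmul g x, hAmul x⁻¹ g⁻¹]
      noncomm_ring
    rw [Finset.sum_congr rfl fun g _ => step g, Finset.sum_const, Finset.card_univ,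
      show ((N : K) • T1 X) = N • T1 X from Nat.cast_smul_eq_nsmul K N (T1 X)]
  set PiL : Matrix (Fin n) (Fin n) K →ₗ[K] Matrix (Fin n) (Fin n) K := (N : K)⁻¹ • T1 with hPiL
  have hPiidem : ∀ X, PiL (PiL X) = PiL X := by
    intro X
    simp only [hPiL, LinearMap.smul_apply]
    rw [_root_.map_smul, hT1T1, smul_smul, smul_smul]
    congr 1
    field_simp
  have hPione : PiL 1 = 1 := by
    simp only [hPiL, LinearMap.smul_apply]
    have hT11 : T1 1 = (N : K) • 1 := by
      rw [hT1apply]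
      have hid : ∀ h : H, A h * 1 * A h⁻¹ = 1 := fun h => by rw [mul_one, hAinv']
      rw [Finset.sum_congr rfl fun h _ => hid h, Finset.sum_const, Finset.card_univ,
        show ((N : K) • (1 : Matrix (Fin n) (Fin n) K)) = N • 1 from
          Nat.cast_smul_eq_nsmul K N 1]
    rw [hT11, smul_smul, inv_mul_cancel₀ hNK, one_smul]
  have hone_ne : (1 : Matrix (Fin n) (Fin n) K) ≠ 0 := by
    intro hcontra
    have hzz := congrFun (congrFun hcontra ⟨0, hMI.1⟩) ⟨0, hMI.1⟩
    simp [Matrix.one_apply_eq] at hzz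
  have hPine : PiL ≠ 0 := fun hz => hone_ne (by rw [← hPione, hz]; rfl)
  obtain ⟨c1, hc1pos, hc1⟩ := trace_idem_linmap hPiidem hPine
  have e1 : LinearMap.trace K _ T1 = ∑ h : H, χ h * χ h⁻¹ := by
    rw [hT1, map_sum]
    refine Finset.sum_congr rfl fun h _ => ?_
    rw [trace_conjOp, ← htr, ← htr]
  have hcne : (∑ h : H, χ h * χ h⁻¹) ≠ 0 := by
    have e2 : (c1 : K) = (N : K)⁻¹ * (∑ h : H, χ h * χ h⁻¹) := by
      rw [← hc1, hPiL, _root_.map_smul, e1, smul_eq_mul]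
    intro hzero
    rw [hzero, mul_zero] at e2
    exact Nat.cast_ne_zero.mpr hc1pos.ne' e2
  -- the intertwiner
  set T2 : Matrix (Fin n) (Fin n) K →ₗ[K] Matrix (Fin n) (Fin n) K :=
    ∑ h : H, conjOp (A h) (B2 h⁻¹) with hT2
  have hT2apply : ∀ X, T2 X = ∑ h : H, A h * X * B2 h⁻¹ := by
    intro X
    rw [hT2, LinearMap.sum_apply]
    rfl
  have hT2trace : LinearMap.trace K _ T2 = ∑ h : H, χ h * χ h⁻¹ := by
    rw [hT2, map_sum]
    refine Finset.sum_congr rfl fun h _ => ?_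
    rw [trace_conjOp, ← htr, htrB2]
  have hT2ne : T2 ≠ 0 := by
    intro hz
    rw [hz, map_zero] at hT2trace
    exact hcne hT2trace.symm
  have hX0 : ∃ X₀, T2 X₀ ≠ 0 := by
    by_contra hno
    push_neg at hno
    exact hT2ne (LinearMap.ext fun X => by rw [hno X]; rfl)
  obtain ⟨X₀, hY0⟩ := hX0
  set Y := T2 X₀ with hYdef
  have hintw : ∀ g : H, A g * Y = Y * B2 g := by
    intro g
    have hcan : B2 g⁻¹ * B2 g = 1 := by rw [← hB2mul, inv_mul_cancel, hB2one]
    rw [hYdef, hT2apply, Finset.mul_sum, Finset.sum_mul]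
    refine Fintype.sum_equiv (Equiv.mulLeft g) _ _ ?_
    intro x
    show A g * (A x * X₀ * B2 x⁻¹) = A (g * x) * X₀ * B2 (g * x)⁻¹ * B2 g
    rw [_root_.mul_inv_rev, hAmul g x, hB2mul x⁻¹ g⁻¹]
    rw [show A g * A x * X₀ * (B2 x⁻¹ * B2 g⁻¹) * B2 g
        = A g * (A x * X₀ * B2 x⁻¹) * (B2 g⁻¹ * B2 g) by noncomm_ring]
    rw [hcan, mul_one]
  set YL := Matrix.mulVecLin Y with hYL
  have hUinv : ∀ (h : H), ∀ v ∈ LinearMap.range YL, A h *ᵥ v ∈ LinearMap.range YL := by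
    rintro h v ⟨w, rfl⟩
    refine ⟨B2 h *ᵥ w, ?_⟩
    rw [hYL, Matrix.mulVecLin_apply, Matrix.mulVecLin_apply, Matrix.mulVec_mulVec,
      ← hintw h, ← Matrix.mulVec_mulVec]
  rcases hMI.2 (LinearMap.range YL) hUinv with hUbot | hUtop
  · -- then Y = 0, contradiction
    apply hY0
    have hall : ∀ v, Y *ᵥ v = 0 := by
      intro v
      have hmem : YL v ∈ LinearMap.range YL := LinearMap.mem_range_self YL v
      rw [hUbot] at hmem
      simpa [hYL, Matrix.mulVecLin_apply] using (Submodule.mem_bot K).mp hmem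
    show Y = 0
    ext i j
    have hij := congrFun (hall (Pi.single j 1)) i
    rw [Matrix.mulVec_single] at hij
    simpa using hij
  · have hsurj : Function.Surjective YL := LinearMap.range_eq_top.mp hUtop
    have hinj : Function.Injective YL := LinearMap.injective_iff_surjective.mpr hsurj
    set W₃ := W₂.map YL with hW₃
    have hW₃inv : ∀ (h : H), ∀ v ∈ W₃, A h *ᵥ v ∈ W₃ := by
      rintro h v ⟨w, hwW₂, rfl⟩
      refine ⟨B2 h *ᵥ w, hinv₂ h w hwW₂, ?_⟩
      rw [hYL, Matrix.mulVecLin_apply, Matrix.mulVecLin_apply, Matrix.mulVec_mulVec,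
        ← hintw h, ← Matrix.mulVec_mulVec]
    rcases hMI.2 W₃ hW₃inv with hbot | htop
    · apply hW₂bot
      refine (Submodule.eq_bot_iff _).mpr fun x hx => ?_
      have hmem : YL x ∈ W₃ := Submodule.mem_map_of_mem hx
      rw [hbot] at hmem
      have h0 : YL x = 0 := (Submodule.mem_bot K).mp hmem
      exact hinj (by rw [h0, map_zero])
    · have h1 : Module.finrank K W₃ ≤ Module.finrank K W₂ := Submodule.finrank_map_le YL W₂
      have h2 : Module.finrank K W₃ = n := by
        rw [htop, finrank_top, Module.finrank_fin_fun]
      omega
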